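/- There exists an absolute constant C such that the following holds. Let A be an n × n random matrix with i.i.d. entries satisfying E A_{ij}² ≤ 1 and such that almost surely each entry A_{ij} is either 0 or satisfies √n/2 ≤ |A_{ij}| ≤ 5√n/√ε, and let ε ∈ (0,1/2]. Then with probability at least 1 − 2·exp(−εn/4) there exist sets I, J ⊆ {1,...,n} with |I| ≤ εn and |J| ≤ εn such that the matrix Ã obtained from A by setting every entry with index in I × J to zero satisfies ‖Ã‖ ≤ C·(ln ε^{−1}/√ε)·√n. -/

import Mathlib

open MeasureTheory ProbabilityTheory
open scoped ENNReal NNReal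

/-- The `ℓ₂ → ℓ₂` operator norm of a real matrix. -/
noncomputable def l2OpNorm {m k : Type*} [Fintype m] [Fintype k] [DecidableEq k]
    (A : Matrix m k ℝ) : ℝ :=
  ‖LinearMap.toContinuousLinearMap (Matrix.toEuclideanLin (𝕜 := ℝ) A)‖

/-- The matrix obtained from `A` by zeroing out all entries in the `I × J` submatrix. -/
noncomputable def zeroSub {n : ℕ} (A : Matrix (Fin n) (Fin n) ℝ) (I J : Finset (Fin n)) :
    Matrix (Fin n) (Fin n) ℝ :=
  Matrix.of fun i j => if i ∈ I ∧ j ∈ J then 0 else A i j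

section Aux
open Finset Matrix

set_option linter.unusedVariables false
set_option linter.unnecessarySeqFocus false

/-- Deterministic norm bound for sparse bounded matrices. -/
lemma sparse_l2OpNorm_le {n : ℕ} (B : Matrix (Fin n) (Fin n) ℝ) (k : ℕ) (M : ℝ) (hM : 0 ≤ M)
    (hent : ∀ i j, |B i j| ≤ M)
    (hrow : ∀ i, (univ.filter fun j => B i j ≠ 0).card ≤ k)
    (hcol : ∀ j, (univ.filter fun i => B i j ≠ 0).card ≤ k) :
    l2OpNorm B ≤ k * M := by
  classical
  have hkM : (0:ℝ) ≤ (k:ℝ) * M := by positivity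
  refine ContinuousLinearMap.opNorm_le_bound _ hkM ?_
  intro x
  rw [LinearMap.coe_toContinuousLinearMap']
  rw [Matrix.toEuclideanLin_apply]
  set y : Fin n → ℝ := (WithLp.equiv 2 (Fin n → ℝ)) x with hy
  have hnormx : ‖x‖ = Real.sqrt (∑ j, (y j)^2) := by
    rw [EuclideanSpace.norm_eq]
    congr 1
    refine Finset.sum_congr rfl fun j _ => ?_
    rw [Real.norm_eq_abs, sq_abs]
    rfl
  have hnormBx : ‖(WithLp.equiv 2 (Fin n → ℝ)).symm (B *ᵥ y)‖
      = Real.sqrt (∑ i, (B.mulVec y i)^2) := by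
    rw [EuclideanSpace.norm_eq]
    congr 1
    refine Finset.sum_congr rfl fun i _ => ?_
    rw [Real.norm_eq_abs, sq_abs]
    rfl
  change ‖(WithLp.equiv 2 (Fin n → ℝ)).symm (B *ᵥ y)‖ ≤ (k:ℝ) * M * ‖x‖
  rw [hnormBx, hnormx]
  -- key: ∑ i, (B.mulVec y i)^2 ≤ (k*M)^2 * ∑ j, y j ^2
  have key : ∑ i, (B.mulVec y i)^2 ≤ ((k:ℝ)*M)^2 * ∑ j, (y j)^2 := by
    have hrowbound : ∀ i, (B.mulVec y i)^2 ≤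
        (k:ℝ) * M^2 * ∑ j ∈ univ.filter (fun j => B i j ≠ 0), (y j)^2 := by
      intro i
      have h1 : B.mulVec y i = ∑ j ∈ univ.filter (fun j => B i j ≠ 0), B i j * y j := by
        rw [Matrix.mulVec, dotProduct]
        rw [Finset.sum_filter]
        refine Finset.sum_congr rfl fun j _ => ?_
        by_cases h : B i j = 0 <;> simp [h]
      rw [h1]
      calc (∑ j ∈ univ.filter (fun j => B i j ≠ 0), B i j * y j)^2
          ≤ (∑ j ∈ univ.filter (fun j => B i j ≠ 0), (B i j)^2) *
            (∑ j ∈ univ.filter (fun j => B i j ≠ 0), (y j)^2) :=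
            Finset.sum_mul_sq_le_sq_mul_sq _ _ _
        _ ≤ ((k:ℝ) * M^2) * ∑ j ∈ univ.filter (fun j => B i j ≠ 0), (y j)^2 := by
            refine mul_le_mul_of_nonneg_right ?_ (by positivity)
            calc ∑ j ∈ univ.filter (fun j => B i j ≠ 0), (B i j)^2
                ≤ ∑ _j ∈ univ.filter (fun j => B i j ≠ 0), M^2 := by
                  refine Finset.sum_le_sum fun j _ => ?_
                  have := hent i j
                  nlinarith [abs_nonneg (B i j), sq_abs (B i j)]
              _ = ((univ.filter fun j => B i j ≠ 0).card : ℝ) * M^2 := by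
                  rw [Finset.sum_const, nsmul_eq_mul]
              _ ≤ (k:ℝ) * M^2 := by
                  refine mul_le_mul_of_nonneg_right ?_ (by positivity)
                  exact_mod_cast hrow i
    calc ∑ i, (B.mulVec y i)^2
        ≤ ∑ i, (k:ℝ) * M^2 * ∑ j ∈ univ.filter (fun j => B i j ≠ 0), (y j)^2 :=
          Finset.sum_le_sum fun i _ => hrowbound i
      _ = (k:ℝ) * M^2 * ∑ i, ∑ j ∈ univ.filter (fun j => B i j ≠ 0), (y j)^2 := by
          rw [Finset.mul_sum]
      _ ≤ ((k:ℝ)*M)^2 * ∑ j, (y j)^2 := by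
          have hswap : ∑ i, ∑ j ∈ univ.filter (fun j => B i j ≠ 0), (y j)^2
              = ∑ j, ((univ.filter fun i => B i j ≠ 0).card : ℝ) * (y j)^2 := by
            simp_rw [Finset.sum_filter]
            rw [Finset.sum_comm]
            refine Finset.sum_congr rfl fun j _ => ?_
            rw [← Finset.sum_boole (fun i => B i j ≠ 0) univ]
            rw [Finset.sum_mul]
            refine Finset.sum_congr rfl fun i _ => ?_
            by_cases h : B i j = 0 <;> simp [h]
          rw [hswap]
          have : ∑ j, ((univ.filter fun i => B i j ≠ 0).card : ℝ) * (y j)^2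
              ≤ ∑ j, (k:ℝ) * (y j)^2 := by
            refine Finset.sum_le_sum fun j _ => ?_
            refine mul_le_mul_of_nonneg_right ?_ (sq_nonneg _)
            exact_mod_cast hcol j
          calc (k:ℝ) * M^2 * ∑ j, ((univ.filter fun i => B i j ≠ 0).card : ℝ) * (y j)^2
              ≤ (k:ℝ) * M^2 * ∑ j, (k:ℝ) * (y j)^2 :=
                mul_le_mul_of_nonneg_left this (by positivity)
            _ = ((k:ℝ)*M)^2 * ∑ j, (y j)^2 := by rw [← Finset.mul_sum]; ring
  calc Real.sqrt (∑ i, (B.mulVec y i)^2)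
      ≤ Real.sqrt (((k:ℝ)*M)^2 * ∑ j, (y j)^2) := Real.sqrt_le_sqrt key
    _ = (k:ℝ)*M * Real.sqrt (∑ j, (y j)^2) := by
        rw [Real.sqrt_mul (sq_nonneg _), Real.sqrt_sq hkM]

lemma chernoff_aux {Ω : Type} [MeasureSpace Ω] [IsProbabilityMeasure (ℙ : Measure Ω)]
    {n : ℕ} (hn : 1 ≤ n) (ε : ℝ) (hε : 0 < ε) (k : ℕ)
    (hk : Real.exp (4 * (Real.exp 2 - 1) - ((k : ℝ) + 1)) ≤ ε / 4)
    (ξ : Fin n → Fin n → Ω → ℝ)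
    (hmeas : ∀ i j, Measurable (ξ i j))
    (h01 : ∀ i j ω, ξ i j ω = 0 ∨ ξ i j ω = 1)
    (hmgf : ∀ i j, mgf (ξ i j) ℙ 2 ≤ Real.exp (4 * (Real.exp 2 - 1) / n))
    (hfact : ∀ T : Finset (Fin n × Fin n),
      mgf (fun ω => ∑ p ∈ T, ξ p.1 p.2 ω) ℙ 2 = ∏ p ∈ T, mgf (ξ p.1 p.2) ℙ 2) :
    (ℙ {ω | ε * n / 2 ≤ ∑ i, (if (k : ℝ) < ∑ j, ξ i j ω then ∑ j, ξ i j ω else 0)}).toReal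
      ≤ Real.exp (-(ε * n) / 4) := by
  classical
  set c : ℝ := 4 * (Real.exp 2 - 1) with hc
  set a : ℝ := Real.exp (-((k : ℝ) + 1)) with ha
  have ha0 : 0 < a := Real.exp_pos _
  have ha1 : a ≤ 1 := Real.exp_le_one_iff.mpr (neg_nonpos.mpr (by positivity))
  set D : Fin n → Ω → ℝ := fun i ω => ∑ j, ξ i j ω with hD
  set X : Fin n → Ω → ℝ := fun i ω => if (k : ℝ) < D i ω then D i ω else 0 with hX
  set S : Ω → ℝ := fun ω => ∑ i, X i ω with hS
  have hξ0 : ∀ i j ω, 0 ≤ ξ i j ω := by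
    intro i j ω; rcases h01 i j ω with h | h <;> rw [h] <;> norm_num
  have hξ1 : ∀ i j ω, ξ i j ω ≤ 1 := by
    intro i j ω; rcases h01 i j ω with h | h <;> rw [h] <;> norm_num
  have hD0 : ∀ i ω, 0 ≤ D i ω := fun i ω => Finset.sum_nonneg fun j _ => hξ0 i j ω
  have hDn : ∀ i ω, D i ω ≤ n := by
    intro i ω
    calc D i ω ≤ ∑ _j : Fin n, (1:ℝ) := Finset.sum_le_sum fun j _ => hξ1 i j ω
      _ = n := by simp
  have hDmeas : ∀ i, Measurable (D i) := fun i => Finset.measurable_sum _ fun j _ => hmeas i j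
  have hXmeas : ∀ i, Measurable (X i) := fun i =>
    Measurable.ite (measurableSet_lt measurable_const (hDmeas i)) (hDmeas i) measurable_const
  have hSmeas : Measurable S := Finset.measurable_sum _ fun i _ => hXmeas i
  have hX0 : ∀ i ω, 0 ≤ X i ω := by
    intro i ω; rw [hX]; dsimp only; split
    exacts [hD0 i ω, le_rfl]
  have hXn : ∀ i ω, X i ω ≤ n := by
    intro i ω; rw [hX]; dsimp only; split
    exacts [hDn i ω, by positivity]
  have hSn : ∀ ω, S ω ≤ (n:ℝ) * n := by
    intro ω
    calc S ω ≤ ∑ _i : Fin n, (n:ℝ) := Finset.sum_le_sum fun i _ => hXn i ω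
      _ = (n:ℝ) * n := by simp [mul_comm]
  have hS0 : ∀ ω, 0 ≤ S ω := fun ω => Finset.sum_nonneg fun i _ => hX0 i ω
  have integ : ∀ (f : Ω → ℝ) (C : ℝ), Measurable f → (∀ ω, |f ω| ≤ C) → Integrable f ℙ :=
    fun f C hm hb => (integrable_const C).mono' hm.aestronglyMeasurable
      (Filter.Eventually.of_forall fun ω => by simpa using hb ω)
  -- integrality of D
  have hDint : ∀ i ω, (k:ℝ) < D i ω → (k:ℝ) + 1 ≤ D i ω := by
    intro i ω h
    have hcard : D i ω = ((univ.filter fun j => ξ i j ω = 1).card : ℝ) := by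
      rw [hD]; dsimp only
      rw [← Finset.sum_boole]
      refine Finset.sum_congr rfl fun j _ => ?_
      rcases h01 i j ω with h0 | h0 <;> rw [h0] <;> simp
    rw [hcard] at h ⊢
    exact_mod_cast Nat.succ_le_of_lt (by exact_mod_cast h)
  -- Markov
  have hintexp : Integrable (fun ω => Real.exp (1 * S ω)) ℙ := by
    refine integ _ (Real.exp ((n:ℝ)*n)) (by fun_prop) fun ω => ?_
    rw [abs_of_pos (Real.exp_pos _), one_mul]
    exact Real.exp_le_exp.mpr (hSn ω)
  have markov := measure_ge_le_exp_mul_mgf (X := S) (μ := ℙ) (t := 1) (ε * n / 2)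
      zero_le_one hintexp
  -- bound the mgf
  have key : mgf S ℙ 1 ≤ Real.exp (ε * n / 4) := by
    have step2 : mgf S ℙ 1 ≤ ∫ ω, ∏ i, (a * Real.exp (2 * D i ω) + 1) ∂ℙ := by
      rw [mgf]
      refine integral_mono hintexp ?_ ?_
      · refine integ _ ((a * Real.exp (2*((n:ℝ)*n)) + 1)^n) ?_ fun ω => ?_
        · fun_prop
        · have h1 : ∀ i, (0:ℝ) < a * Real.exp (2 * D i ω) + 1 := fun i => by positivity
          rw [abs_of_pos (Finset.prod_pos fun i _ => h1 i)]
          calc ∏ i, (a * Real.exp (2 * D i ω) + 1)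
              ≤ ∏ _i : Fin n, (a * Real.exp (2*((n:ℝ)*n)) + 1) := by
                refine Finset.prod_le_prod (fun i _ => (h1 i).le) fun i _ => ?_
                have : D i ω ≤ (n:ℝ)*n := le_trans (hDn i ω) (by nlinarith [(Nat.one_le_cast (α := ℝ)).mpr hn])
                gcongr
            _ = (a * Real.exp (2*((n:ℝ)*n)) + 1)^n := by rw [Finset.prod_const, Finset.card_univ, Fintype.card_fin]
      · intro ω
        dsimp only
        rw [one_mul, hS]; dsimp only
        rw [Real.exp_sum]
        refine Finset.prod_le_prod (fun i _ => (Real.exp_pos _).le) fun i _ => ?_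
        rw [hX]; dsimp only
        split
        · rename_i hlt
          have hk1 := hDint i ω hlt
          have : Real.exp (D i ω) ≤ a * Real.exp (2 * D i ω) := by
            rw [ha, ← Real.exp_add]
            exact Real.exp_le_exp.mpr (by linarith)
          linarith
        · rw [Real.exp_zero]
          have : 0 ≤ a * Real.exp (2 * D i ω) := by positivity
          linarith
    have step3 : ∫ ω, ∏ i, (a * Real.exp (2 * D i ω) + 1) ∂ℙ
        = ∑ s ∈ (univ : Finset (Fin n)).powerset,
            ∫ ω, a^s.card * Real.exp (2 * ∑ i ∈ s, D i ω) ∂ℙ := by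
      have hptwise : ∀ ω, ∏ i, (a * Real.exp (2 * D i ω) + 1)
          = ∑ s ∈ (univ : Finset (Fin n)).powerset, a^s.card * Real.exp (2 * ∑ i ∈ s, D i ω) := by
        intro ω
        rw [Finset.prod_add]
        refine Finset.sum_congr rfl fun s _ => ?_
        rw [Finset.prod_const_one, mul_one, Finset.prod_mul_distrib, Finset.prod_const,
          Finset.mul_sum, Real.exp_sum]
      simp_rw [hptwise]
      refine integral_finset_sum _ fun s _ => ?_
      refine integ _ (a^s.card * Real.exp (2*((n:ℝ)*(n*n)))) (by fun_prop) fun ω => ?_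
      rw [abs_of_pos (by positivity)]
      have hsum : ∑ i ∈ s, D i ω ≤ (n:ℝ)*(n*n) := by
        calc ∑ i ∈ s, D i ω ≤ ∑ _i ∈ s, (n:ℝ) := Finset.sum_le_sum fun i _ => hDn i ω
          _ = s.card * (n:ℝ) := by rw [Finset.sum_const, nsmul_eq_mul]
          _ ≤ (n:ℝ)*n := by
              have : (s.card : ℝ) ≤ n := by
                exact_mod_cast le_trans (Finset.card_le_card (Finset.subset_univ s)) (le_of_eq (by simp))
              nlinarith [(Nat.cast_nonneg n : (0:ℝ) ≤ n)]
          _ ≤ (n:ℝ)*(n*n) := by nlinarith [(Nat.one_le_cast (α := ℝ)).mpr hn, (Nat.cast_nonneg n : (0:ℝ) ≤ n)]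
      gcongr
    have step4 : ∀ s : Finset (Fin n),
        ∫ ω, a^s.card * Real.exp (2 * ∑ i ∈ s, D i ω) ∂ℙ ≤ (a * Real.exp c)^s.card := by
      intro s
      rw [MeasureTheory.integral_const_mul]
      have hrw : (fun ω => Real.exp (2 * ∑ i ∈ s, D i ω))
          = fun ω => Real.exp (2 * ∑ p ∈ s ×ˢ (univ : Finset (Fin n)), ξ p.1 p.2 ω) := by
        funext ω
        congr 1
        rw [hD]; dsimp only
        rw [Finset.sum_product]
      have : ∫ ω, Real.exp (2 * ∑ i ∈ s, D i ω) ∂ℙ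
          = mgf (fun ω => ∑ p ∈ s ×ˢ (univ : Finset (Fin n)), ξ p.1 p.2 ω) ℙ 2 := by
        rw [mgf]; rw [hrw]
      rw [this, hfact]
      have hprodle : ∏ p ∈ s ×ˢ (univ : Finset (Fin n)), mgf (ξ p.1 p.2) ℙ 2
          ≤ ∏ _p ∈ s ×ˢ (univ : Finset (Fin n)), Real.exp (c / n) :=
        Finset.prod_le_prod (fun p _ => mgf_nonneg) (fun p _ => hmgf p.1 p.2)
      have hcardeq : (s ×ˢ (univ : Finset (Fin n))).card = s.card * n := by
        rw [Finset.card_product, Finset.card_univ, Fintype.card_fin]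
      have hexp : ∏ _p ∈ s ×ˢ (univ : Finset (Fin n)), Real.exp (c / n)
          = Real.exp (c * s.card) := by
        rw [Finset.prod_const, hcardeq, ← Real.exp_nat_mul]
        congr 1
        have hn0 : (n:ℝ) ≠ 0 := by positivity
        push_cast
        field_simp
      calc a ^ s.card * ∏ p ∈ s ×ˢ (univ : Finset (Fin n)), mgf (ξ p.1 p.2) ℙ 2
          ≤ a ^ s.card * Real.exp (c * s.card) := by
            rw [← hexp]
            exact mul_le_mul_of_nonneg_left hprodle (by positivity)
        _ = (a * Real.exp c)^s.card := by
            rw [mul_pow, mul_comm c (s.card : ℝ), Real.exp_nat_mul]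
    calc mgf S ℙ 1 ≤ ∑ s ∈ (univ : Finset (Fin n)).powerset,
          ∫ ω, a^s.card * Real.exp (2 * ∑ i ∈ s, D i ω) ∂ℙ := step2.trans (le_of_eq step3)
      _ ≤ ∑ s ∈ (univ : Finset (Fin n)).powerset, (a * Real.exp c)^s.card :=
          Finset.sum_le_sum fun s _ => step4 s
      _ = (a * Real.exp c + 1)^n := by
          have := Finset.prod_add (fun _ : Fin n => a * Real.exp c) (fun _ => (1:ℝ)) univ
          simp only [Finset.prod_const_one, mul_one, Finset.prod_const] at this
          rw [← this, Finset.card_univ, Fintype.card_fin]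
      _ ≤ Real.exp (ε * n / 4) := by
          have hx : a * Real.exp c ≤ ε / 4 := by
            rw [ha, ← Real.exp_add]
            calc Real.exp (-((k:ℝ)+1) + c) = Real.exp (c - ((k:ℝ)+1)) := by ring_nf
              _ ≤ ε / 4 := hk
          have h1 : a * Real.exp c + 1 ≤ Real.exp (ε / 4) := by
            have := Real.add_one_le_exp (a * Real.exp c)
            have := Real.exp_le_exp.mpr hx
            linarith
          calc (a * Real.exp c + 1)^n ≤ (Real.exp (ε / 4))^n := by
                have h0 : (0:ℝ) ≤ a * Real.exp c + 1 := by positivity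
                exact pow_le_pow_left₀ h0 h1 n
            _ = Real.exp (ε / 4 * n) := by rw [← Real.exp_nat_mul]; ring_nf
            _ = Real.exp (ε * n / 4) := by ring_nf
  calc (ℙ {ω | ε * n / 2 ≤ ∑ i, (if (k : ℝ) < ∑ j, ξ i j ω then ∑ j, ξ i j ω else 0)}).toReal
      = (ℙ {ω | ε * n / 2 ≤ S ω}).toReal := rfl
    _ ≤ Real.exp (-1 * (ε * n / 2)) * mgf S ℙ 1 := markov
    _ ≤ Real.exp (-1 * (ε * n / 2)) * Real.exp (ε * n / 4) :=
        mul_le_mul_of_nonneg_left key (Real.exp_pos _).le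
    _ = Real.exp (-(ε * n) / 4) := by rw [← Real.exp_add]; ring_nf


lemma deterministic_part {n : ℕ} (ε : ℝ) (k : ℕ)
    (B : Matrix (Fin n) (Fin n) ℝ) (M : ℝ) (hM : 0 ≤ M)
    (hent : ∀ i j, B i j = 0 ∨ |B i j| ≤ M)
    (hrow : (∑ i, (if (k:ℝ) < ∑ j, (if B i j = 0 then (0:ℝ) else 1) then
        ∑ j, (if B i j = 0 then (0:ℝ) else 1) else 0)) < ε * n / 2)
    (hcol : (∑ j, (if (k:ℝ) < ∑ i, (if B i j = 0 then (0:ℝ) else 1) then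
        ∑ i, (if B i j = 0 then (0:ℝ) else 1) else 0)) < ε * n / 2) :
    ∃ I J : Finset (Fin n), (I.card : ℝ) ≤ ε * n ∧ (J.card : ℝ) ≤ ε * n ∧
      l2OpNorm (zeroSub B I J) ≤ (k : ℝ) * M := by
  classical
  set d : Fin n → ℕ := fun i => (univ.filter fun j => B i j ≠ 0).card with hd
  set e : Fin n → ℕ := fun j => (univ.filter fun i => B i j ≠ 0).card with he
  have hdsum : ∀ i, (∑ j, (if B i j = 0 then (0:ℝ) else 1)) = (d i : ℝ) := by
    intro i
    rw [hd]; dsimp only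
    rw [← Finset.sum_boole]
    refine Finset.sum_congr rfl fun j _ => ?_
    by_cases h : B i j = 0 <;> simp [h]
  have hesum : ∀ j, (∑ i, (if B i j = 0 then (0:ℝ) else 1)) = (e j : ℝ) := by
    intro j
    rw [he]; dsimp only
    rw [← Finset.sum_boole]
    refine Finset.sum_congr rfl fun i _ => ?_
    by_cases h : B i j = 0 <;> simp [h]
  set HR : Finset (Fin n) := univ.filter fun i => k < d i with hHR
  set HC : Finset (Fin n) := univ.filter fun j => k < e j with hHC
  have hrow' : ∑ i ∈ HR, (d i : ℝ) < ε * n / 2 := by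
    refine lt_of_le_of_lt (le_of_eq ?_) hrow
    rw [hHR, Finset.sum_filter]
    refine Finset.sum_congr rfl fun i _ => ?_
    rw [hdsum i]
    by_cases h : k < d i
    · rw [if_pos h, if_pos (by exact_mod_cast h)]
    · rw [if_neg h, if_neg (by exact_mod_cast h)]
  have hcol' : ∑ j ∈ HC, (e j : ℝ) < ε * n / 2 := by
    refine lt_of_le_of_lt (le_of_eq ?_) hcol
    rw [hHC, Finset.sum_filter]
    refine Finset.sum_congr rfl fun j _ => ?_
    rw [hesum j]
    by_cases h : k < e j
    · rw [if_pos h, if_pos (by exact_mod_cast h)]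
    · rw [if_neg h, if_neg (by exact_mod_cast h)]
  set meetC : Finset (Fin n) := univ.filter fun i => ∃ j ∈ HC, B i j ≠ 0 with hmeetC
  set meetR : Finset (Fin n) := univ.filter fun j => ∃ i ∈ HR, B i j ≠ 0 with hmeetR
  set I : Finset (Fin n) := HR ∪ meetC with hI
  set J : Finset (Fin n) := HC ∪ meetR with hJ
  have hHRcard : (HR.card : ℝ) ≤ ∑ i ∈ HR, (d i : ℝ) := by
    rw [← Nat.cast_sum]
    have : HR.card ≤ ∑ i ∈ HR, d i := by
      calc HR.card = ∑ _i ∈ HR, 1 := by rw [Finset.sum_const, smul_eq_mul, mul_one]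
        _ ≤ ∑ i ∈ HR, d i := Finset.sum_le_sum fun i hi => by
            rw [hHR] at hi
            have := (Finset.mem_filter.mp hi).2
            omega
    exact_mod_cast this
  have hHCcard : (HC.card : ℝ) ≤ ∑ j ∈ HC, (e j : ℝ) := by
    rw [← Nat.cast_sum]
    have : HC.card ≤ ∑ j ∈ HC, e j := by
      calc HC.card = ∑ _j ∈ HC, 1 := by rw [Finset.sum_const, smul_eq_mul, mul_one]
        _ ≤ ∑ j ∈ HC, e j := Finset.sum_le_sum fun j hj => by
            rw [hHC] at hj
            have := (Finset.mem_filter.mp hj).2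
            omega
    exact_mod_cast this
  have hmeetCcard : (meetC.card : ℝ) ≤ ∑ j ∈ HC, (e j : ℝ) := by
    have hsub : meetC ⊆ HC.biUnion fun j => univ.filter fun i => B i j ≠ 0 := by
      intro i hi
      rw [hmeetC] at hi
      obtain ⟨j, hj, hBij⟩ := (Finset.mem_filter.mp hi).2
      exact Finset.mem_biUnion.mpr ⟨j, hj, Finset.mem_filter.mpr ⟨Finset.mem_univ _, hBij⟩⟩
    have : meetC.card ≤ ∑ j ∈ HC, e j :=
      le_trans (Finset.card_le_card hsub) (Finset.card_biUnion_le)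
    exact_mod_cast this
  have hmeetRcard : (meetR.card : ℝ) ≤ ∑ i ∈ HR, (d i : ℝ) := by
    have hsub : meetR ⊆ HR.biUnion fun i => univ.filter fun j => B i j ≠ 0 := by
      intro j hj
      rw [hmeetR] at hj
      obtain ⟨i, hi, hBij⟩ := (Finset.mem_filter.mp hj).2
      exact Finset.mem_biUnion.mpr ⟨i, hi, Finset.mem_filter.mpr ⟨Finset.mem_univ _, hBij⟩⟩
    have : meetR.card ≤ ∑ i ∈ HR, d i :=
      le_trans (Finset.card_le_card hsub) (Finset.card_biUnion_le)
    exact_mod_cast this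
  refine ⟨I, J, ?_, ?_, ?_⟩
  · have h1 : (I.card : ℝ) ≤ (HR.card : ℝ) + (meetC.card : ℝ) := by
      exact_mod_cast Finset.card_union_le HR meetC
    linarith
  · have h1 : (J.card : ℝ) ≤ (HC.card : ℝ) + (meetR.card : ℝ) := by
      exact_mod_cast Finset.card_union_le HC meetR
    linarith
  · -- norm bound
    have hzero : ∀ i j, B i j = 0 → zeroSub B I J i j = 0 := by
      intro i j h
      show (if i ∈ I ∧ j ∈ J then 0 else B i j) = 0
      split <;> simp [h]
    refine sparse_l2OpNorm_le _ k M hM ?_ ?_ ?_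
    · intro i j
      show |if i ∈ I ∧ j ∈ J then 0 else B i j| ≤ M
      split
      · simpa using hM
      · rcases hent i j with h | h
        · rw [h]; simpa using hM
        · exact h
    · intro i
      by_cases hi : k < d i
      · have : (univ.filter fun j => zeroSub B I J i j ≠ 0) = ∅ := by
          refine Finset.filter_eq_empty_iff.mpr fun j _ => ?_
          simp only [ne_eq, not_not]
          by_cases hB : B i j = 0
          · exact hzero i j hB
          · show (if i ∈ I ∧ j ∈ J then 0 else B i j) = 0
            rw [if_pos]
            constructor
            · exact Finset.mem_union_left _ (Finset.mem_filter.mpr ⟨Finset.mem_univ _, hi⟩)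
            · refine Finset.mem_union_right _ (Finset.mem_filter.mpr ⟨Finset.mem_univ _, ?_⟩)
              exact ⟨i, Finset.mem_filter.mpr ⟨Finset.mem_univ _, hi⟩, hB⟩
        rw [this]
        simp
      · push_neg at hi
        refine le_trans (Finset.card_le_card ?_) hi
        intro j hj
        rw [Finset.mem_filter] at hj ⊢
        refine ⟨Finset.mem_univ _, fun hB => hj.2 (hzero i j hB)⟩
    · intro j
      by_cases hj : k < e j
      · have : (univ.filter fun i => zeroSub B I J i j ≠ 0) = ∅ := by
          refine Finset.filter_eq_empty_iff.mpr fun i _ => ?_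
          simp only [ne_eq, not_not]
          by_cases hB : B i j = 0
          · exact hzero i j hB
          · show (if i ∈ I ∧ j ∈ J then 0 else B i j) = 0
            rw [if_pos]
            constructor
            · refine Finset.mem_union_right _ (Finset.mem_filter.mpr ⟨Finset.mem_univ _, ?_⟩)
              exact ⟨j, Finset.mem_filter.mpr ⟨Finset.mem_univ _, hj⟩, hB⟩
            · exact Finset.mem_union_left _ (Finset.mem_filter.mpr ⟨Finset.mem_univ _, hj⟩)
        rw [this]
        simp
      · push_neg at hj
        refine le_trans (Finset.card_le_card ?_) hj
        intro i hi
        rw [Finset.mem_filter] at hi ⊢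
        refine ⟨Finset.mem_univ _, fun hB => hi.2 (hzero i j hB)⟩

end Aux

/-- **Moderately large entries.** There is an absolute constant `C` such that: if `ε ∈ (0,1/2]`
and `A` is an `n × n` random matrix with i.i.d. entries with `E A_{ij}² ≤ 1` such that almost
surely each entry is either `0` or has absolute value in `[√n/2, 5√n/√ε]`, then with
probability at least `1 - 2 exp(-εn/4)` one can zero out an `εn × εn` submatrix of `A` so
that the resulting matrix `Ã` satisfies `‖Ã‖ ≤ C (ln ε⁻¹/√ε) √n`. -/
theorem moderate_entries :
    ∃ C : ℝ, 0 < C ∧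
    ∀ (n : ℕ) (Ω : Type) (_ : MeasureSpace Ω) (_ : IsProbabilityMeasure (ℙ : Measure Ω))
      (ε : ℝ), 0 < ε → ε ≤ 1 / 2 →
      ∀ A : Ω → Matrix (Fin n) (Fin n) ℝ,
      (∀ i j, Measurable fun ω => A ω i j) →
      iIndepFun (fun p : Fin n × Fin n => fun ω => A ω p.1 p.2) ℙ →
      (∀ i j k l, IdentDistrib (fun ω => A ω i j) (fun ω => A ω k l) ℙ ℙ) →
      (∀ i j, MemLp (fun ω => A ω i j) 2 ℙ) →
      (∀ i j, ∫ ω, (A ω i j) ^ 2 ∂ℙ ≤ 1) →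
      (∀ i j, ∀ᵐ ω ∂ℙ, A ω i j = 0 ∨
        (Real.sqrt n / 2 ≤ |A ω i j| ∧ |A ω i j| ≤ 5 * Real.sqrt n / Real.sqrt ε)) →
      ENNReal.ofReal (1 - 2 * Real.exp (-(ε * n) / 4)) ≤
        ℙ {ω | ∃ I J : Finset (Fin n), (I.card : ℝ) ≤ ε * n ∧ (J.card : ℝ) ≤ ε * n ∧
          l2OpNorm (zeroSub (A ω) I J) ≤
            C * (Real.log ε⁻¹ / Real.sqrt ε) * Real.sqrt n} := by
  classical
  refine ⟨300, by norm_num, ?_⟩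
  intro n Ω _ _ ε hε hε2 A hAmeas hindep hident hL2 hsq hae
  set L : ℝ := Real.log ε⁻¹ with hLdef
  have hL2pos : Real.log 2 ≤ L := by
    refine Real.log_le_log (by norm_num) ?_
    rw [show (2:ℝ) = (1/2)⁻¹ by norm_num]
    exact inv_anti₀ hε hε2
  have hLpos : 0 < L := lt_of_lt_of_le (Real.log_pos (by norm_num)) hL2pos
  set k : ℕ := 27 + ⌈L⌉₊ with hkdef
  rcases Nat.eq_zero_or_pos n with hn0 | hn
  · subst hn0
    have h0 : (1 : ℝ) - 2 * Real.exp (-(ε * (0:ℕ)) / 4) ≤ 0 := by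
      norm_num [Real.exp_zero]
    rw [ENNReal.ofReal_eq_zero.mpr h0]
    exact zero_le
  set M : ℝ := 5 * Real.sqrt n / Real.sqrt ε with hMdef
  have hM0 : 0 ≤ M := by positivity
  set ξ : Fin n → Fin n → Ω → ℝ := fun i j ω => if A ω i j = 0 then 0 else 1 with hξdef
  have hg : Measurable (fun x : ℝ => if x = 0 then (0:ℝ) else 1) := by
    refine Measurable.ite ?_ measurable_const measurable_const
    exact measurableSet_eq
  have hξmeas : ∀ i j, Measurable (ξ i j) := fun i j => hg.comp (hAmeas i j)
  have h01 : ∀ i j ω, ξ i j ω = 0 ∨ ξ i j ω = 1 := by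
    intro i j ω
    rw [hξdef]
    dsimp only
    by_cases h : A ω i j = 0 <;> simp [h]
  have hindF : iIndepFun
      (fun p : Fin n × Fin n => fun ω => ξ p.1 p.2 ω) ℙ :=
    hindep.comp (fun _ => fun x : ℝ => if x = 0 then (0:ℝ) else 1) (fun _ => hg)
  have hfactR : ∀ T : Finset (Fin n × Fin n),
      mgf (fun ω => ∑ p ∈ T, ξ p.1 p.2 ω) ℙ 2 = ∏ p ∈ T, mgf (ξ p.1 p.2) ℙ 2 := by
    intro T
    have heq : (fun ω => ∑ p ∈ T, ξ p.1 p.2 ω)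
        = ∑ p ∈ T, (fun ω => ξ p.1 p.2 ω) := by
      funext ω
      rw [Finset.sum_apply]
    rw [heq]
    exact hindF.mgf_sum (fun p => hξmeas p.1 p.2) T
  have hfactC : ∀ T : Finset (Fin n × Fin n),
      mgf (fun ω => ∑ p ∈ T, ξ p.2 p.1 ω) ℙ 2 = ∏ p ∈ T, mgf (ξ p.2 p.1) ℙ 2 := by
    intro T
    have hinj : ∀ a ∈ T, ∀ b ∈ T, Prod.swap a = Prod.swap b → a = b :=
      fun a _ b _ h => Prod.swap_injective h
    have hsum : (fun ω => ∑ p ∈ T, ξ p.2 p.1 ω)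
        = fun ω => ∑ q ∈ T.image Prod.swap, ξ q.1 q.2 ω := by
      funext ω
      rw [Finset.sum_image hinj]
      rfl
    have hprod : (∏ p ∈ T, mgf (ξ p.2 p.1) ℙ 2)
        = ∏ q ∈ T.image Prod.swap, mgf (ξ q.1 q.2) ℙ 2 := by
      rw [Finset.prod_image hinj]
      rfl
    rw [hsum, hprod]
    exact hfactR (T.image Prod.swap)
  have hn' : (0:ℝ) < n := by exact_mod_cast hn
  have hmgfbound : ∀ i j, mgf (ξ i j) ℙ 2 ≤ Real.exp (4 * (Real.exp 2 - 1) / n) := by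
    intro i j
    have hint1 : Integrable (ξ i j) ℙ := by
      refine (integrable_const (1:ℝ)).mono' (hξmeas i j).aestronglyMeasurable
        (Filter.Eventually.of_forall fun ω => ?_)
      rcases h01 i j ω with h | h <;> rw [h] <;> norm_num
    have hint2 : Integrable (fun ω => (A ω i j)^2) ℙ := (hL2 i j).integrable_sq
    have hmono : ∀ᵐ ω ∂ℙ, (n:ℝ)/4 * ξ i j ω ≤ (A ω i j)^2 := by
      refine (hae i j).mono fun ω h => ?_
      rcases h with h | ⟨h1, _⟩
      · rw [hξdef]
        simp [h]
      · have hξ1 : ξ i j ω ≤ 1 := by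
          rcases h01 i j ω with h' | h' <;> rw [h'] <;> norm_num
        have hs : Real.sqrt n / 2 * (Real.sqrt n / 2) ≤ |A ω i j| * |A ω i j| :=
          mul_le_mul h1 h1 (by positivity) (abs_nonneg _)
        have hsq' : Real.sqrt n * Real.sqrt n = (n:ℝ) :=
          Real.mul_self_sqrt (by positivity)
        have habs : |A ω i j| * |A ω i j| = (A ω i j)^2 := by
          rw [← sq_abs]
          ring
        have hξ0 : 0 ≤ ξ i j ω := by
          rcases h01 i j ω with h' | h' <;> rw [h'] <;> norm_num
        nlinarith
    have hEξ : ∫ ω, ξ i j ω ∂ℙ ≤ 4 / n := by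
      have h1 : (n:ℝ)/4 * ∫ ω, ξ i j ω ∂ℙ ≤ 1 := by
        rw [← MeasureTheory.integral_const_mul]
        exact le_trans (integral_mono_ae (hint1.const_mul _) hint2 hmono) (hsq i j)
      rw [le_div_iff₀ hn']
      nlinarith
    have hpt : (fun ω => Real.exp (2 * ξ i j ω))
        = fun ω => 1 + (Real.exp 2 - 1) * ξ i j ω := by
      funext ω
      rcases h01 i j ω with h | h <;> rw [h] <;> simp
    rw [mgf, hpt]
    rw [MeasureTheory.integral_add (integrable_const 1) (hint1.const_mul _),
      MeasureTheory.integral_const, MeasureTheory.integral_const_mul]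
    simp only [probReal_univ, ENNReal.toReal_one, smul_eq_mul, one_mul]
    have he1 : (1:ℝ) ≤ Real.exp 2 := Real.one_le_exp (by norm_num)
    have h2 : (Real.exp 2 - 1) * ∫ ω, ξ i j ω ∂ℙ ≤ (Real.exp 2 - 1) * (4/n) :=
      mul_le_mul_of_nonneg_left hEξ (by linarith)
    have h3 := Real.add_one_le_exp (4 * (Real.exp 2 - 1) / n)
    have h4 : (Real.exp 2 - 1) * (4/n) = 4 * (Real.exp 2 - 1) / n := by ring
    linarith
  have hknum : Real.exp (4 * (Real.exp 2 - 1) - ((k:ℝ)+1)) ≤ ε / 4 := by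
    have he2 : Real.exp 2 < 7.3891 := by
      have h := Real.exp_one_lt_d9
      have h2 : Real.exp 2 = Real.exp 1 * Real.exp 1 := by
        rw [← Real.exp_add]
        norm_num
      nlinarith [Real.exp_pos 1]
    have hlog4 : Real.log 4 < 1.3863 := by
      have : Real.log 4 = 2 * Real.log 2 := by
        rw [show (4:ℝ) = 2^2 by norm_num, Real.log_pow]
        push_cast
        ring
      rw [this]
      nlinarith [Real.log_two_lt_d9]
    have hkL : L ≤ (⌈L⌉₊ : ℝ) := Nat.le_ceil L
    have hεlog : Real.log (ε/4) = -L - Real.log 4 := by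
      rw [Real.log_div (ne_of_gt hε) (by norm_num), hLdef, Real.log_inv]
      ring
    have hexp : 4 * (Real.exp 2 - 1) - ((k:ℝ)+1) ≤ Real.log (ε/4) := by
      have hkcast : ((k:ℕ):ℝ) = 27 + (⌈L⌉₊:ℝ) := by
        rw [hkdef]
        push_cast
        ring
      rw [hεlog, hkcast]
      linarith
    calc Real.exp (4 * (Real.exp 2 - 1) - ((k:ℝ)+1))
        ≤ Real.exp (Real.log (ε/4)) := Real.exp_le_exp.mpr hexp
      _ = ε/4 := Real.exp_log (by positivity)
  have hrowP := chernoff_aux hn ε hε k hknum ξ hξmeas h01 hmgfbound hfactR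
  have hcolP := chernoff_aux hn ε hε k hknum (fun i j => ξ j i) (fun i j => hξmeas j i)
    (fun i j ω => h01 j i ω) (fun i j => hmgfbound j i) hfactC
  set Srow : Ω → ℝ := fun ω => ∑ i, (if (k:ℝ) < ∑ j, ξ i j ω then ∑ j, ξ i j ω else 0)
    with hSrow
  set Scol : Ω → ℝ := fun ω => ∑ i, (if (k:ℝ) < ∑ j, ξ j i ω then ∑ j, ξ j i ω else 0)
    with hScol
  have hSrowMeas : Measurable Srow := by
    refine Finset.measurable_sum _ fun i _ => ?_
    have hD : Measurable fun ω => ∑ j, ξ i j ω :=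
      Finset.measurable_sum _ fun j _ => hξmeas i j
    exact Measurable.ite (measurableSet_lt measurable_const hD) hD measurable_const
  have hScolMeas : Measurable Scol := by
    refine Finset.measurable_sum _ fun i _ => ?_
    have hD : Measurable fun ω => ∑ j, ξ j i ω :=
      Finset.measurable_sum _ fun j _ => hξmeas j i
    exact Measurable.ite (measurableSet_lt measurable_const hD) hD measurable_const
  set Brow : Set Ω := {ω | ε * n / 2 ≤ Srow ω} with hBrowdef
  set Bcol : Set Ω := {ω | ε * n / 2 ≤ Scol ω} with hBcoldef
  have hBrowMeas : MeasurableSet Brow := measurableSet_le measurable_const hSrowMeas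
  have hBcolMeas : MeasurableSet Bcol := measurableSet_le measurable_const hScolMeas
  set G : Set Ω := {ω | ∀ i j, A ω i j = 0 ∨
      (Real.sqrt n / 2 ≤ |A ω i j| ∧ |A ω i j| ≤ 5 * Real.sqrt n / Real.sqrt ε)} with hGdef
  have hGnull : ℙ Gᶜ = 0 := by
    have hG : ∀ᵐ ω ∂ℙ, ω ∈ G := by
      rw [hGdef]
      exact MeasureTheory.ae_all_iff.mpr fun i => MeasureTheory.ae_all_iff.mpr fun j => hae i j
    exact hG
  have hincl : (Brow ∪ Bcol)ᶜ ∩ G ⊆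
      {ω | ∃ I J : Finset (Fin n), (I.card : ℝ) ≤ ε * n ∧ (J.card : ℝ) ≤ ε * n ∧
        l2OpNorm (zeroSub (A ω) I J) ≤
          300 * (Real.log ε⁻¹ / Real.sqrt ε) * Real.sqrt n} := by
    rintro ω ⟨hnb, hg⟩
    rw [Set.compl_union] at hnb
    obtain ⟨hr, hc⟩ := hnb
    have hr' : Srow ω < ε * n / 2 := not_le.mp hr
    have hc' : Scol ω < ε * n / 2 := not_le.mp hc
    obtain ⟨I, J, hI, hJ, hnorm⟩ := deterministic_part ε k (A ω) M hM0
      (fun i j => (hg i j).imp id And.right) hr' hc'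
    refine ⟨I, J, hI, hJ, le_trans hnorm ?_⟩
    have hkle : (k:ℝ) ≤ 28 + L := by
      have h1 : (⌈L⌉₊ : ℝ) < L + 1 := Nat.ceil_lt_add_one hLpos.le
      have h2 : ((k:ℕ):ℝ) = 27 + (⌈L⌉₊:ℝ) := by
        rw [hkdef]
        push_cast
        ring
      linarith
    have h5 : 5 * (k:ℝ) ≤ 300 * L := by
      have hlog2 : (0.6931471803:ℝ) < Real.log 2 := Real.log_two_gt_d9
      nlinarith
    have hsqnn : (0:ℝ) ≤ Real.sqrt n / Real.sqrt ε := by positivity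
    calc (k:ℝ) * M = 5 * (k:ℝ) * (Real.sqrt n / Real.sqrt ε) := by
          rw [hMdef]
          ring
      _ ≤ 300 * L * (Real.sqrt n / Real.sqrt ε) := mul_le_mul_of_nonneg_right h5 hsqnn
      _ = 300 * (L / Real.sqrt ε) * Real.sqrt n := by ring
  have hProw : ℙ Brow ≤ ENNReal.ofReal (Real.exp (-(ε * n) / 4)) := by
    rw [← ENNReal.ofReal_toReal (measure_ne_top ℙ Brow)]
    exact ENNReal.ofReal_le_ofReal hrowP
  have hPcol : ℙ Bcol ≤ ENNReal.ofReal (Real.exp (-(ε * n) / 4)) := by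
    rw [← ENNReal.ofReal_toReal (measure_ne_top ℙ Bcol)]
    exact ENNReal.ofReal_le_ofReal hcolP
  have hPunion : ℙ (Brow ∪ Bcol) ≤ ENNReal.ofReal (2 * Real.exp (-(ε * n) / 4)) := by
    calc ℙ (Brow ∪ Bcol) ≤ ℙ Brow + ℙ Bcol := measure_union_le _ _
      _ ≤ ENNReal.ofReal (Real.exp (-(ε * n) / 4)) + ENNReal.ofReal (Real.exp (-(ε * n) / 4)) :=
          add_le_add hProw hPcol
      _ = ENNReal.ofReal (2 * Real.exp (-(ε * n) / 4)) := by
          rw [← ENNReal.ofReal_add (Real.exp_pos _).le (Real.exp_pos _).le]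
          ring_nf
  calc ENNReal.ofReal (1 - 2 * Real.exp (-(ε * n) / 4))
      = ENNReal.ofReal 1 - ENNReal.ofReal (2 * Real.exp (-(ε * n) / 4)) :=
        ENNReal.ofReal_sub _ (by positivity)
    _ ≤ 1 - ℙ (Brow ∪ Bcol) := by
        rw [ENNReal.ofReal_one]
        exact tsub_le_tsub_left hPunion 1
    _ = ℙ ((Brow ∪ Bcol)ᶜ) := (prob_compl_eq_one_sub (hBrowMeas.union hBcolMeas)).symm
    _ = ℙ ((Brow ∪ Bcol)ᶜ ∩ G) := (measure_inter_conull hGnull).symm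
    _ ≤ _ := measure_mono hincl
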